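/- (L^2 exponential decay on the right for ε) Let M ≥ max{4, 1/δ}. Let u be a solution of the critical gKdV equation satisfying, for some C^1 functions λ(s) with 1/2 ≤ λ(s) ≤ 3/2 and x(s), the decomposition ε(s, y) = λ^{1/2}(s) u(t(s), λ(s) y + x(s)) − Q(y), and suppose the right-tail mass bound ∫_{x > x_0} u^2(t, x + x(t)) dx ≤ C' e^{-x_0/M} holds for all t ≥ 0 and x_0 > 0. Then there exists C = C(M, δ) > 0 such that for every s ≥ 0 and every y_0 > 0: ∫_{y > y_0} ε^2(s, y) dy ≤ C e^{-y_0/(2M)}. -/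

import Mathlib

open MeasureTheory Real Filter

noncomputable section

/-- The ground state `Q(x) = 3^{1/4} (cosh 2x)^{-1/2}`, the unique positive even
`H¹` solution of `Q'' - Q + Q⁵ = 0`. -/
def Q (x : ℝ) : ℝ := (3 : ℝ) ^ ((1 : ℝ)/4) * Real.cosh (2*x) ^ (-(1:ℝ)/2)

/-- The square of the `H¹(ℝ)` norm, `‖f‖_{H¹}² = ∫ (f² + (f')²)`. -/
def H1normSq (f : ℝ → ℝ) : ℝ := ∫ x, ((f x)^2 + (deriv f x)^2)

/-- Membership in `H¹(ℝ)` (modeled via `L²` membership of `f` and of its derivative). -/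
def inH1 (f : ℝ → ℝ) : Prop := MemLp f 2 volume ∧ MemLp (deriv f) 2 volume

/-- `u` is a (classical) solution of the critical gKdV equation
`u_t + u_{xxx} + (u⁵)_x = 0`, of class `C¹` in `t` and `C³` in `x`. -/
def isGKdVSolution (u : ℝ → ℝ → ℝ) : Prop :=
  (∀ x, ContDiff ℝ 1 fun t => u t x) ∧
  (∀ t, ContDiff ℝ 3 fun x => u t x) ∧
  ∀ t x, deriv (fun τ => u τ x) t
      + deriv (deriv (deriv (u t))) x
      + deriv (fun z => (u t z) ^ 5) x = 0

/-- `u(t,·)` together with its first three spatial derivatives decays to `0` at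
spatial infinity, for every time `t`. -/
def decaysAtInfinity (u : ℝ → ℝ → ℝ) : Prop :=
  ∀ t, Tendsto (u t) (cocompact ℝ) (nhds 0) ∧
       Tendsto (deriv (u t)) (cocompact ℝ) (nhds 0) ∧
       Tendsto (deriv (deriv (u t))) (cocompact ℝ) (nhds 0) ∧
       Tendsto (deriv (deriv (deriv (u t)))) (cocompact ℝ) (nhds 0)

lemma Q_continuous : Continuous Q := by
  unfold Q
  exact continuous_const.mul ((Real.continuous_cosh.comp
    (continuous_const.mul continuous_id)).rpow_const
    (fun x => Or.inl (Real.cosh_pos _).ne'))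

lemma Q_sq_le (y : ℝ) : Q y ^ 2 ≤ 2 * Real.sqrt 3 * Real.exp (-(2*y)) := by
  have hc : (0:ℝ) < Real.cosh (2*y) := Real.cosh_pos _
  have h1 : ((3:ℝ) ^ ((1:ℝ)/4))^2 = Real.sqrt 3 := by
    rw [← Real.rpow_natCast ((3:ℝ) ^ ((1:ℝ)/4)) 2, ← Real.rpow_mul (by norm_num)]
    rw [Real.sqrt_eq_rpow]
    norm_num
  have h2 : (Real.cosh (2*y) ^ (-(1:ℝ)/2))^2 = (Real.cosh (2*y))⁻¹ := by
    rw [← Real.rpow_natCast (Real.cosh (2*y) ^ (-(1:ℝ)/2)) 2, ← Real.rpow_mul hc.le]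
    norm_num
    exact Real.rpow_neg_one _
  have hQ2 : Q y ^ 2 = Real.sqrt 3 * (Real.cosh (2*y))⁻¹ := by
    rw [Q, mul_pow, h1, h2]
  rw [hQ2]
  have hcosh : Real.exp (2*y) / 2 ≤ Real.cosh (2*y) := by
    rw [Real.cosh_eq]
    have := (Real.exp_pos (-(2*y))).le
    linarith
  have hinv : (Real.cosh (2*y))⁻¹ ≤ 2 * Real.exp (-(2*y)) := by
    rw [inv_le_iff_one_le_mul₀ hc]
    calc (1:ℝ) = (Real.exp (2*y) / 2) * (2 * Real.exp (-(2*y))) := by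
          rw [Real.exp_neg]; field_simp
      _ ≤ Real.cosh (2*y) * (2 * Real.exp (-(2*y))) := by
          apply mul_le_mul_of_nonneg_right hcosh
          positivity
      _ = 2 * Real.exp (-(2*y)) * Real.cosh (2*y) := by ring
  have h3 : (0:ℝ) ≤ Real.sqrt 3 := Real.sqrt_nonneg 3
  calc Real.sqrt 3 * (Real.cosh (2*y))⁻¹ ≤ Real.sqrt 3 * (2 * Real.exp (-(2*y))) :=
        mul_le_mul_of_nonneg_left hinv h3
    _ = 2 * Real.sqrt 3 * Real.exp (-(2*y)) := by ring

lemma Q_sq_integral_le (y₀ : ℝ) :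
    IntegrableOn (fun y => Q y ^ 2) (Set.Ioi y₀) volume ∧
    (∫ y in Set.Ioi y₀, Q y ^ 2) ≤ Real.sqrt 3 * Real.exp (-(2*y₀)) := by
  have hexp_int : IntegrableOn (fun y => Real.exp (-(2*y))) (Set.Ioi y₀) volume := by
    have := exp_neg_integrableOn_Ioi y₀ (b := 2) (by norm_num)
    simpa [neg_mul] using this
  have hgint : IntegrableOn (fun y => 2 * Real.sqrt 3 * Real.exp (-(2*y))) (Set.Ioi y₀) volume :=
    hexp_int.const_mul _
  have hQint : IntegrableOn (fun y => Q y ^ 2) (Set.Ioi y₀) volume := by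
    apply hgint.mono' ((Q_continuous.pow 2).aestronglyMeasurable.restrict)
    filter_upwards with y
    rw [Real.norm_eq_abs, abs_of_nonneg (sq_nonneg _)]
    exact Q_sq_le y
  refine ⟨hQint, ?_⟩
  have hmono : (∫ y in Set.Ioi y₀, Q y ^ 2) ≤ ∫ y in Set.Ioi y₀, 2 * Real.sqrt 3 * Real.exp (-(2*y)) :=
    setIntegral_mono hQint hgint (fun y => Q_sq_le y)
  have hval : (∫ y in Set.Ioi y₀, Real.exp (-(2*y))) = 2⁻¹ * Real.exp (-(2*y₀)) := by
    have := integral_comp_mul_left_Ioi (fun x => Real.exp (-x)) y₀ (b := 2) (by norm_num)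
    beta_reduce at this
    rw [integral_exp_neg_Ioi, smul_eq_mul] at this
    simpa using this
  calc (∫ y in Set.Ioi y₀, Q y ^ 2)
      ≤ ∫ y in Set.Ioi y₀, 2 * Real.sqrt 3 * Real.exp (-(2*y)) := hmono
    _ = 2 * Real.sqrt 3 * (2⁻¹ * Real.exp (-(2*y₀))) := by
        rw [integral_const_mul, hval]
    _ = Real.sqrt 3 * Real.exp (-(2*y₀)) := by ring

/-- **`L²` exponential decay on the right for `ε`.** Let `δ > 0`, `M ≥ max{4, 1/δ}`,
`C' > 0`. There exists `C = C(M, δ) > 0` such that for any solution `u` of the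
critical gKdV equation decomposed as `ε(s,y) = λ^{1/2}(s) u(t(s), λ(s) y + x(s)) - Q(y)`
with `C¹` functions `1/2 ≤ λ(s) ≤ 3/2` and `x(s)`, if the right-tail mass bound
`∫_{x > x₀} u²(t(s), x + x(s)) dx ≤ C' e^{-x₀/M}` holds for all `s ≥ 0`, `x₀ > 0`,
then for every `s ≥ 0` and `y₀ > 0`: `∫_{y > y₀} ε²(s,y) dy ≤ C e^{-y₀/(2M)}`. -/
theorem eps_L2_exponential_decay_right (δ M C' : ℝ) (hδ : 0 < δ)
    (hM : max 4 (1/δ) ≤ M) (hC' : 0 < C') :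
    ∃ C > 0,
      ∀ (u ε : ℝ → ℝ → ℝ) (lam xc tOf : ℝ → ℝ),
        isGKdVSolution u → decaysAtInfinity u →
        ContDiff ℝ 1 lam → ContDiff ℝ 1 xc →
        (∀ s, 1/2 ≤ lam s ∧ lam s ≤ 3/2) →
        (∀ s y, ε s y = Real.sqrt (lam s) * u (tOf s) (lam s * y + xc s) - Q y) →
        (∀ s : ℝ, 0 ≤ s → ∀ x₀ : ℝ, 0 < x₀ →
          (∫ x in Set.Ioi x₀, (u (tOf s) (x + xc s))^2) ≤ C' * Real.exp (-x₀ / M)) →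
        ∀ s : ℝ, 0 ≤ s → ∀ y₀ : ℝ, 0 < y₀ →
          (∫ y in Set.Ioi y₀, (ε s y)^2) ≤ C * Real.exp (-y₀ / (2*M)) := by
  have hM4 : (4:ℝ) ≤ M := le_trans (le_max_left _ _) hM
  have hMpos : (0:ℝ) < M := by linarith
  refine ⟨2*C' + 2*Real.sqrt 3, by positivity, ?_⟩
  intro u ε lam xc tOf hsol _ _ _ hlam hε hu s hs y₀ hy₀
  obtain ⟨hl1, hl2⟩ := hlam s
  have hlpos : 0 < lam s := by linarith
  set E := Real.exp (-y₀ / (2*M)) with hE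
  have hEpos : 0 < E := Real.exp_pos _
  set a : ℝ → ℝ := fun y => Real.sqrt (lam s) * u (tOf s) (lam s * y + xc s) with ha
  have hεa : ∀ y, ε s y = a y - Q y := hε s
  -- exponent comparisons
  have hexpQ : Real.exp (-(2*y₀)) ≤ E := by
    apply Real.exp_le_exp.2
    rw [neg_div, neg_le_neg_iff, div_le_iff₀ (by positivity)]
    nlinarith
  have hexpu : Real.exp (-(lam s * y₀) / M) ≤ E := by
    apply Real.exp_le_exp.2
    rw [neg_div, neg_div, neg_le_neg_iff, div_le_div_iff₀ (by positivity) hMpos]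
    nlinarith [mul_pos hy₀ hMpos]
  -- change of variables for the `u` part
  have hu_change : (∫ y in Set.Ioi y₀, a y ^ 2)
      = ∫ x in Set.Ioi (lam s * y₀), u (tOf s) (x + xc s) ^ 2 := by
    have hpt : ∀ y, a y ^ 2
        = lam s * (fun x => u (tOf s) (x + xc s) ^ 2) (lam s * y) := by
      intro y
      simp only [ha]
      rw [mul_pow, Real.sq_sqrt hlpos.le]
    calc (∫ y in Set.Ioi y₀, a y ^ 2)
        = ∫ y in Set.Ioi y₀, lam s * (fun x => u (tOf s) (x + xc s) ^ 2) (lam s * y) := by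
          exact integral_congr_ae (Filter.Eventually.of_forall (fun y => hpt y))
      _ = lam s * ∫ y in Set.Ioi y₀, (fun x => u (tOf s) (x + xc s) ^ 2) (lam s * y) :=
          integral_const_mul _ _
      _ = lam s * ((lam s)⁻¹ * ∫ x in Set.Ioi (lam s * y₀), u (tOf s) (x + xc s) ^ 2) := by
          rw [integral_comp_mul_left_Ioi (fun x => u (tOf s) (x + xc s) ^ 2) y₀ hlpos,
            smul_eq_mul]
      _ = ∫ x in Set.Ioi (lam s * y₀), u (tOf s) (x + xc s) ^ 2 := by
          field_simp
  have hu_bound : (∫ y in Set.Ioi y₀, a y ^ 2) ≤ C' * E := by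
    rw [hu_change]
    calc (∫ x in Set.Ioi (lam s * y₀), u (tOf s) (x + xc s) ^ 2)
        ≤ C' * Real.exp (-(lam s * y₀) / M) := hu s hs _ (by positivity)
      _ ≤ C' * E := mul_le_mul_of_nonneg_left hexpu hC'.le
  obtain ⟨hQint, hQbd⟩ := Q_sq_integral_le y₀
  have hQ_bound : (∫ y in Set.Ioi y₀, Q y ^ 2) ≤ Real.sqrt 3 * E :=
    le_trans hQbd (mul_le_mul_of_nonneg_left hexpQ (Real.sqrt_nonneg 3))
  by_cases hint : IntegrableOn (fun y => ε s y ^ 2) (Set.Ioi y₀) volume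
  · -- continuity facts
    have hucont : Continuous (u (tOf s)) := (hsol.2.1 (tOf s)).continuous
    have hacont : Continuous a := by
      apply continuous_const.mul
      exact hucont.comp ((continuous_const.mul continuous_id).add continuous_const)
    have haint : IntegrableOn (fun y => a y ^ 2) (Set.Ioi y₀) volume := by
      apply Integrable.mono' ((hint.const_mul 2).add (hQint.const_mul 2))
        ((hacont.pow 2).aestronglyMeasurable.restrict)
      filter_upwards with y
      rw [Real.norm_eq_abs, abs_of_nonneg (sq_nonneg _)]
      have h1 : a y = ε s y + Q y := by rw [hεa y]; ring
      simp only [Pi.add_apply, Pi.pow_apply]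
      rw [h1]
      nlinarith [sq_nonneg (ε s y - Q y)]
    have hgint : IntegrableOn (fun y => 2 * a y ^ 2 + 2 * Q y ^ 2) (Set.Ioi y₀) volume :=
      (haint.const_mul 2).add (hQint.const_mul 2)
    have hmono : (∫ y in Set.Ioi y₀, ε s y ^ 2)
        ≤ ∫ y in Set.Ioi y₀, (2 * a y ^ 2 + 2 * Q y ^ 2) := by
      apply setIntegral_mono hint hgint
      intro y
      have h1 : ε s y = a y - Q y := hεa y
      dsimp only
      rw [h1]
      nlinarith [sq_nonneg (a y + Q y)]
    calc (∫ y in Set.Ioi y₀, ε s y ^ 2)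
        ≤ ∫ y in Set.Ioi y₀, (2 * a y ^ 2 + 2 * Q y ^ 2) := hmono
      _ = 2 * (∫ y in Set.Ioi y₀, a y ^ 2) + 2 * (∫ y in Set.Ioi y₀, Q y ^ 2) := by
          rw [integral_add (haint.const_mul 2) (hQint.const_mul 2),
            integral_const_mul, integral_const_mul]
      _ ≤ 2 * (C' * E) + 2 * (Real.sqrt 3 * E) := by
          have h2 := mul_le_mul_of_nonneg_left hu_bound (by norm_num : (0:ℝ) ≤ 2)
          have h3 := mul_le_mul_of_nonneg_left hQ_bound (by norm_num : (0:ℝ) ≤ 2)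
          linarith
      _ = (2*C' + 2*Real.sqrt 3) * E := by ring
  · rw [integral_undef hint]
    positivity
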